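/- Suppose R belongs to the class 𝓡̃, with t̄ ∈ [0,1) the witness point of conditions (ii)–(iii). Then the set Ξ_R := { ω ∈ (3, σ−1) : 2R_max²/σ² < 2R_min²/(ω+1)² − 2‖R'‖·R_max/(ω+1) < 2R_max²/(ω−1)² + 2‖R'‖·R_max/(ω−1) < −R''(t̄)·R_min } is nonempty; in fact it contains a nonempty open interval. -/

import Mathlib

noncomputable section

/-- Sup-norm of a function (for a continuous 1-periodic function this is the maximum of `|f|`). -/
def supNorm (f : ℝ → ℝ) : ℝ := sSup (Set.range fun t => |f t|)

/-- Minimum value of `R` (attained for a continuous 1-periodic `R`). -/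
def Rmin (R : ℝ → ℝ) : ℝ := sInf (Set.range R)

/-- Maximum value of `R` (attained for a continuous 1-periodic `R`). -/
def Rmax (R : ℝ → ℝ) : ℝ := sSup (Set.range R)

/-- The constant `σ = min { R_min/(2‖R'‖) , 2√(1+√(1−ε²))·R_min/√‖(R²)''‖ }`. -/
def sigmaR (R : ℝ → ℝ) (ε : ℝ) : ℝ :=
  min (Rmin R / (2 * supNorm (deriv R)))
    (2 * Real.sqrt (1 + Real.sqrt (1 - ε ^ 2)) * Rmin R /
      Real.sqrt (supNorm (deriv (deriv (fun t => R t ^ 2)))))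

set_option maxHeartbeats 800000 in
theorem xi_key (m M D σ c : ℝ) (hm : 0 < m) (hmM : m ≤ M) (hD : 0 ≤ D) (hσ : 4 < σ)
    (hd1 : 0 < c * m - D * M)
    (hii1 : 3 < 1 + Real.sqrt (2 * M ^ 2 / (c * m - D * M)))
    (hii2 : 1 + Real.sqrt (2 * M ^ 2 / (c * m - D * M)) <
      -1 + Real.sqrt (2 * m ^ 2 / (2 * M ^ 2 / σ ^ 2 + D * M))) :
    ∃ a b : ℝ, a < b ∧ ∀ ω ∈ Set.Ioo a b,
      (3 < ω ∧ ω < σ - 1) ∧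
      2 * M ^ 2 / σ ^ 2 < 2 * m ^ 2 / (ω + 1) ^ 2 - 2 * D * M / (ω + 1) ∧
      2 * m ^ 2 / (ω + 1) ^ 2 - 2 * D * M / (ω + 1) <
        2 * M ^ 2 / (ω - 1) ^ 2 + 2 * D * M / (ω - 1) ∧
      2 * M ^ 2 / (ω - 1) ^ 2 + 2 * D * M / (ω - 1) < c * m := by
  have hM : 0 < M := lt_of_lt_of_le hm hmM
  have hσ0 : (0:ℝ) < σ := by linarith
  have hd2 : 0 < 2 * M ^ 2 / σ ^ 2 + D * M := by positivity
  obtain ⟨A, hAdef⟩ : ∃ x : ℝ, x = 2 * M ^ 2 / (c * m - D * M) := ⟨_, rfl⟩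
  obtain ⟨B, hBdef⟩ : ∃ x : ℝ, x = 2 * m ^ 2 / (2 * M ^ 2 / σ ^ 2 + D * M) := ⟨_, rfl⟩
  rw [← hAdef] at hii1 hii2
  rw [← hBdef] at hii2
  have hA0 : 0 < A := by rw [hAdef]; positivity
  have hB0 : 0 < B := by rw [hBdef]; positivity
  have hsA2 : 2 < Real.sqrt A := by linarith
  have hsAB : Real.sqrt A + 2 < Real.sqrt B := by linarith
  have hm2M2 : m ^ 2 ≤ M ^ 2 := by nlinarith
  have hBle : B ≤ σ ^ 2 := by
    have h1 : B ≤ 2 * m ^ 2 / (2 * M ^ 2 / σ ^ 2) := by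
      rw [hBdef]
      apply div_le_div_of_nonneg_left (by positivity) (by positivity)
      nlinarith
    have h2 : 2 * m ^ 2 / (2 * M ^ 2 / σ ^ 2) = m ^ 2 * σ ^ 2 / M ^ 2 := by
      field_simp
    rw [h2] at h1
    have h3 : m ^ 2 * σ ^ 2 / M ^ 2 ≤ σ ^ 2 := by
      rw [div_le_iff₀ (by positivity)]
      nlinarith [mul_le_mul_of_nonneg_right hm2M2 (sq_nonneg σ)]
    linarith
  have hsBσ : Real.sqrt B ≤ σ := by
    calc Real.sqrt B ≤ Real.sqrt (σ ^ 2) := Real.sqrt_le_sqrt hBle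
    _ = σ := Real.sqrt_sq hσ0.le
  refine ⟨1 + Real.sqrt A, -1 + Real.sqrt B, by linarith, ?_⟩
  rintro ω ⟨hω1, hω2⟩
  have hω3 : 3 < ω := by linarith
  have hωp1 : (0:ℝ) < ω + 1 := by linarith
  have hωm1 : (0:ℝ) < ω - 1 := by linarith
  have hsq1 : (ω + 1) ^ 2 < B := by
    have h : ω + 1 < Real.sqrt B := by linarith
    nlinarith [Real.sq_sqrt hB0.le, Real.sqrt_nonneg B]
  have hsq2 : A < (ω - 1) ^ 2 := by
    have h : Real.sqrt A < ω - 1 := by linarith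
    nlinarith [Real.sq_sqrt hA0.le, Real.sqrt_nonneg A]
  have hk1 : (2 * M ^ 2 / σ ^ 2 + D * M) * (ω + 1) ^ 2 < 2 * m ^ 2 := by
    rw [hBdef] at hsq1
    calc (2 * M ^ 2 / σ ^ 2 + D * M) * (ω + 1) ^ 2
        < (2 * M ^ 2 / σ ^ 2 + D * M) * (2 * m ^ 2 / (2 * M ^ 2 / σ ^ 2 + D * M)) :=
          mul_lt_mul_of_pos_left hsq1 hd2
      _ = 2 * m ^ 2 := by field_simp
  have hk2 : 2 * M ^ 2 < (c * m - D * M) * (ω - 1) ^ 2 := by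
    rw [hAdef] at hsq2
    calc 2 * M ^ 2 = (c * m - D * M) * (2 * M ^ 2 / (c * m - D * M)) := by rw [mul_div_assoc', eq_div_iff hd1.ne']; ring
      _ < (c * m - D * M) * (ω - 1) ^ 2 := mul_lt_mul_of_pos_left hsq2 hd1
  have e1 : 2 * M ^ 2 / σ ^ 2 + D * M < 2 * m ^ 2 / (ω + 1) ^ 2 := by
    rw [lt_div_iff₀ (by positivity)]; linarith
  have hDM : 0 ≤ D * M := mul_nonneg hD hM.le
  have e2 : 2 * D * M / (ω + 1) ≤ D * M := by
    calc 2 * D * M / (ω + 1) = D * M * (2 / (ω + 1)) := by ring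
      _ ≤ D * M * 1 := mul_le_mul_of_nonneg_left (by rw [div_le_one hωp1]; linarith) hDM
      _ = D * M := mul_one _
  have e3 : 2 * D * M / (ω - 1) ≤ D * M := by
    calc 2 * D * M / (ω - 1) = D * M * (2 / (ω - 1)) := by ring
      _ ≤ D * M * 1 := mul_le_mul_of_nonneg_left (by rw [div_le_one hωm1]; linarith) hDM
      _ = D * M := mul_one _
  have e4 : 2 * M ^ 2 / (ω - 1) ^ 2 < c * m - D * M := by
    rw [div_lt_iff₀ (by positivity)]; linarith
  have e5 : 0 ≤ 2 * D * M / (ω + 1) := by positivity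
  have e6 : 0 ≤ 2 * D * M / (ω - 1) := by positivity
  have e7 : 2 * m ^ 2 / (ω + 1) ^ 2 < 2 * M ^ 2 / (ω - 1) ^ 2 := by
    rw [div_lt_div_iff₀ (by positivity) (by positivity)]
    have s1 : m ^ 2 * (ω - 1) ^ 2 ≤ M ^ 2 * (ω - 1) ^ 2 :=
      mul_le_mul_of_nonneg_right hm2M2 (sq_nonneg _)
    have s2 : M ^ 2 * (ω - 1) ^ 2 < M ^ 2 * (ω + 1) ^ 2 :=
      mul_lt_mul_of_pos_left (by nlinarith) (by positivity)
    nlinarith [s1, s2]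
  exact ⟨⟨hω3, by linarith⟩, by linarith, by linarith, by linarith⟩

/-- If `R` belongs to the class `𝓡̃` with witness point `t̄` of
conditions (ii)–(iii), then the set `Ξ_R` of rotation numbers `ω ∈ (3, σ−1)` with
`2R_max²/σ² < 2R_min²/(ω+1)² − 2‖R'‖R_max/(ω+1) < 2R_max²/(ω−1)² + 2‖R'‖R_max/(ω−1)
 < −R''(t̄)·R_min` contains a nonempty open interval (in particular it is nonempty). -/
theorem XiR_contains_interval (R : ℝ → ℝ) (ε : ℝ) (hε : ε ∈ Set.Ioo (0 : ℝ) 1)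
    (hC : ContDiff ℝ 2 R) (hper : ∀ t, R (t + 1) = R t) (hpos : ∀ t, 0 < R t)
    (hσ : 4 < sigmaR R ε)
    (tb : ℝ) (htb : tb ∈ Set.Ico (0 : ℝ) 1)
    (hneg : deriv (deriv R) tb * Rmin R + supNorm (deriv R) * Rmax R < 0)
    (hii1 : 3 < 1 + Real.sqrt (2 * Rmax R ^ 2 /
        (-(deriv (deriv R) tb) * Rmin R - supNorm (deriv R) * Rmax R)))
    (hii2 : 1 + Real.sqrt (2 * Rmax R ^ 2 /
        (-(deriv (deriv R) tb) * Rmin R - supNorm (deriv R) * Rmax R)) <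
      -1 + Real.sqrt (2 * Rmin R ^ 2 /
        (2 * Rmax R ^ 2 / sigmaR R ε ^ 2 + supNorm (deriv R) * Rmax R)))
    (hiii1 : deriv R tb = 0)
    (hiii2 : deriv (deriv R) tb < -(2 * Rmax R ^ 2 / (sigmaR R ε ^ 2 * Rmin R))) :
    ∃ a b : ℝ, a < b ∧
      Set.Ioo a b ⊆
        {ω : ℝ | ω ∈ Set.Ioo 3 (sigmaR R ε - 1) ∧
          2 * Rmax R ^ 2 / sigmaR R ε ^ 2 <
            2 * Rmin R ^ 2 / (ω + 1) ^ 2 - 2 * supNorm (deriv R) * Rmax R / (ω + 1) ∧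
          2 * Rmin R ^ 2 / (ω + 1) ^ 2 - 2 * supNorm (deriv R) * Rmax R / (ω + 1) <
            2 * Rmax R ^ 2 / (ω - 1) ^ 2 + 2 * supNorm (deriv R) * Rmax R / (ω - 1) ∧
          2 * Rmax R ^ 2 / (ω - 1) ^ 2 + 2 * supNorm (deriv R) * Rmax R / (ω - 1) <
            -(deriv (deriv R) tb) * Rmin R} := by
  have hp : Function.Periodic R 1 := hper
  have hcont : Continuous R := hC.continuous
  have hrange : Set.range R = R '' Set.Icc 0 1 := by
    apply Set.Subset.antisymm
    · rintro x ⟨t, rfl⟩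
      refine ⟨Int.fract t, ⟨Int.fract_nonneg t, (Int.fract_lt_one t).le⟩, ?_⟩
      have h : Int.fract t = t - (⌊t⌋ : ℤ) * 1 := by rw [mul_one]; rfl
      rw [h, hp.sub_int_mul_eq]
    · rintro x ⟨t, _, rfl⟩; exact ⟨t, rfl⟩
  have hcpt : IsCompact (R '' Set.Icc 0 1) := (isCompact_Icc).image hcont
  have hne : (R '' Set.Icc 0 1).Nonempty := ⟨R 0, 0, by norm_num, rfl⟩
  have hbddA : BddAbove (Set.range R) := hrange ▸ hcpt.bddAbove
  have hbddB : BddBelow (Set.range R) := hrange ▸ hcpt.bddBelow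
  have hmmem : Rmin R ∈ Set.range R := by
    rw [Rmin, hrange]; exact hcpt.sInf_mem hne
  obtain ⟨t0, ht0⟩ := hmmem
  have hm : 0 < Rmin R := ht0 ▸ hpos t0
  have hmM : Rmin R ≤ Rmax R :=
    le_trans (csInf_le hbddB ⟨0, rfl⟩) (le_csSup hbddA ⟨0, rfl⟩)
  have hD : 0 ≤ supNorm (deriv R) :=
    Real.sSup_nonneg (by rintro x ⟨t, rfl⟩; exact abs_nonneg _)
  have hd1 : 0 < -(deriv (deriv R) tb) * Rmin R - supNorm (deriv R) * Rmax R := by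
    nlinarith [hneg]
  obtain ⟨a, b, hab, hmem⟩ := xi_key (Rmin R) (Rmax R) (supNorm (deriv R)) (sigmaR R ε)
    (-(deriv (deriv R) tb)) hm hmM hD hσ (by linarith) (by linarith [hii1]) (by linarith [hii2])
  refine ⟨a, b, hab, fun ω hω => ?_⟩
  obtain ⟨⟨h1, h2⟩, h3, h4, h5⟩ := hmem ω hω
  exact ⟨⟨h1, h2⟩, by linarith, by linarith, by linarith⟩
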